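/- A quasi-choice correspondence c over a finite set X is freely rationalizable (by some arbitrary binary relation) if and only if c satisfies Axiom α (if x ∈ A ⊆ B and x ∈ c(B) then x ∈ c(A)) and Axiom γ (if x ∈ c(A) and x ∈ c(B) then x ∈ c(A ∪ B)). -/
import Mathlib


/-- `r` rationalizes the quasi-choice `c`: `c A` is the set of `r`-maximal elements of `A`. -/
def Rationalizes {X : Type*} (r : X → X → Prop) (c : Set X → Set X) : Prop :=
  ∀ A : Set X, c A = {a ∈ A | ∀ b ∈ A, ¬ r b a}

/-- `c` is freely rationalizable (a ballot): rationalized by an arbitrary binary relation. -/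
def FreelyRat {X : Type*} (c : Set X → Set X) : Prop :=
  ∃ r : X → X → Prop, Rationalizes r c

/-- `c` is asymmetrically rationalizable. -/
def AsymRat {X : Type*} (c : Set X → Set X) : Prop :=
  ∃ r : X → X → Prop, (∀ a b, r a b → ¬ r b a) ∧ Rationalizes r c

/-- Contractiveness: `c` is a quasi-choice. -/
def IsQuasiChoice {X : Type*} (c : Set X → Set X) : Prop :=
  ∀ A : Set X, c A ⊆ A

/-- Axiom α (Chernoff, Standard Contraction Consistency). -/
def AxiomAlpha {X : Type*} (c : Set X → Set X) : Prop :=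
  ∀ ⦃A B : Set X⦄ ⦃x : X⦄, A ⊆ B → x ∈ A → x ∈ c B → x ∈ c A

/-- Axiom γ (Standard Expansion Consistency). -/
def AxiomGamma {X : Type*} (c : Set X → Set X) : Prop :=
  ∀ ⦃A B : Set X⦄ ⦃x : X⦄, x ∈ c A → x ∈ c B → x ∈ c (A ∪ B)

/-- A liberal representation of `c` by the family of ballots `v`. -/
def IsLiberalRep {X : Type*} (c : Set X → Set X) {k : ℕ} (v : Fin k → Set X → Set X) : Prop :=
  (∀ i, FreelyRat (v i)) ∧
    ∀ A : Set X, ∀ x ∈ A, (x ∈ c A ↔ ∃ i, x ∈ v i A)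

/-- A democratic representation of `c` by the family of ballots `v`:
an item is chosen iff more than half of the ballots endorse it. -/
def IsDemRep {X : Type*} (c : Set X → Set X) {k : ℕ} (v : Fin k → Set X → Set X) : Prop :=
  (∀ i, FreelyRat (v i)) ∧
    ∀ A : Set X, ∀ x ∈ A, (x ∈ c A ↔ 2 * Nat.card {i : Fin k // x ∈ v i A} > k)

/-- The liberal number of `c`: the minimum size of a liberal representation (⊤ if none). -/
noncomputable def lib {X : Type*} (c : Set X → Set X) : ℕ∞ :=
  sInf {n : ℕ∞ | ∃ (k : ℕ) (v : Fin k → Set X → Set X), 0 < k ∧ IsLiberalRep c v ∧ n = (k : ℕ∞)}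

/-- The democratic number of `c`: the minimum size of a democratic representation (⊤ if none). -/
noncomputable def dem {X : Type*} (c : Set X → Set X) : ℕ∞ :=
  sInf {n : ℕ∞ | ∃ (k : ℕ) (v : Fin k → Set X → Set X), 0 < k ∧ IsDemRep c v ∧ n = (k : ℕ∞)}

/-- `c` is `s`-majoritarian: some finite family of ballots selects exactly the items
endorsed by a share of ballots strictly larger than `s`. -/
def Majoritarian {X : Type*} (s : ℝ) (c : Set X → Set X) : Prop :=
  ∃ (k : ℕ) (v : Fin k → Set X → Set X), 0 < k ∧ (∀ i, FreelyRat (v i)) ∧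
    ∀ A : Set X, ∀ x ∈ A,
      (x ∈ c A ↔ (Nat.card {i : Fin k // x ∈ v i A} : ℝ) / (k : ℝ) > s)

theorem stmt2 {X : Type*} [Fintype X] (c : Set X → Set X) (hq : IsQuasiChoice c) :
    FreelyRat c ↔ AxiomAlpha c ∧ AxiomGamma c := by
  constructor
  · rintro ⟨r, hr⟩
    constructor
    · intro A B x hAB hxA hxB
      rw [hr] at hxB ⊢
      exact ⟨hxA, fun b hb => hxB.2 b (hAB hb)⟩
    · intro A B x hA hB
      rw [hr] at hA hB ⊢
      exact ⟨Or.inl hA.1, fun b hb => hb.elim (hA.2 b) (hB.2 b)⟩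
  · rintro ⟨ha, hg⟩
    refine ⟨fun b a => a ∉ c {b, a}, fun A => ?_⟩
    ext x
    simp only [Set.mem_setOf_eq, not_not]
    constructor
    · intro hx
      refine ⟨hq A hx, fun b hb => ha ?_ ?_ hx⟩
      · intro y hy
        rcases hy with h | h
        · rwa [h]
        · rw [Set.mem_singleton_iff] at h; rw [h]; exact hq A hx
      · exact Or.inr rfl
    · rintro ⟨hxA, hpair⟩
      -- x ∈ c of every pair {b, x} for b ∈ A; use γ over the finite union
      have key : ∀ s : Finset X, (∀ b ∈ s, x ∈ c {b, x}) →
          x ∈ c ((⋃ b ∈ s, ({b, x} : Set X)) ∪ {x}) := by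
        classical
        intro s
        induction s using Finset.induction with
        | empty => intro _; simpa using hpair x hxA
        | @insert b t hns ih =>
          intro h
          have h1 : x ∈ c {b, x} := h b (Finset.mem_insert_self b t)
          have h2 := ih (fun y hy => h y (Finset.mem_insert_of_mem hy))
          have := hg h1 h2
          convert this using 2
          simp [Finset.set_biUnion_insert, Set.union_assoc]
      have key2 := key (Set.toFinite A).toFinset
        (fun b hb => hpair b ((Set.Finite.mem_toFinset _).mp hb))
      have hAeq : ((⋃ b ∈ (Set.toFinite A).toFinset, ({b, x} : Set X)) ∪ {x}) = A := by
        ext y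
        simp only [Set.mem_union, Set.mem_iUnion, Set.Finite.mem_toFinset,
          Set.mem_singleton_iff, Set.mem_insert_iff]
        constructor
        · rintro (⟨b, hb, hy | hy⟩ | hy) <;> first | (subst hy; assumption) | exact hy ▸ hb
        · intro hy; exact Or.inl ⟨y, hy, Or.inl rfl⟩
      rwa [hAeq] at key2
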